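/- For all continuous w_1, w_2 : [0,T] → ℝ, writing ‖g‖ = sup_{t∈[0,T]} |g(t)| and P_k = ∏_{l=1}^{k} f_{n+1−l}, one has ‖Φ_n[w_1] − Φ_n[w_2]‖ ≤ Σ_{k=1}^{n} ( ‖Φ_{n−k}[w_1]‖ · ‖w_1^k − w_2^k‖ / k! + ‖Φ_{n−k}[w_1] − Φ_{n−k}[w_2]‖ · ‖w_2‖^k / k! ) · ( ‖P_k‖ + T ‖P_k'‖ ). -/
import Mathlib

set_option maxHeartbeats 1000000


open MeasureTheory

/-- The explicit sup-norm estimate from the end of the proof of Theorem 2.1: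
with `‖g‖ = sup_{t ∈ [0,T]} |g t|` and `P_k = ∏_{l=1}^k f_{n+1-l}`,
`‖Φ_n[w₁] − Φ_n[w₂]‖ ≤ Σ_{k=1}^n ( ‖Φ_{n−k}[w₁]‖·‖w₁^k − w₂^k‖/k!
  + ‖Φ_{n−k}[w₁] − Φ_{n−k}[w₂]‖·‖w₂‖^k/k! ) · ( ‖P_k‖ + T‖P_k'‖ )`. -/
theorem stmt11
    (T : ℝ) (hT : 0 < T) (n : ℕ) (hn : 1 ≤ n)
    (f : ℕ → ℝ → ℝ)
    (hf : ∀ i, 1 ≤ i → i ≤ n → ContDiffOn ℝ 1 (f i) (Set.Icc 0 T))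
    (fd : ℕ → ℕ → ℝ → ℝ)
    (hfd : ∀ j k, 1 ≤ k → k ≤ j → j ≤ n → ∀ t ∈ Set.Icc (0:ℝ) T,
      HasDerivWithinAt (fun s => ∏ l ∈ Finset.Icc 1 k, f (j + 1 - l) s)
        (fd j k t) (Set.Icc 0 T) t)
    (Φ : (ℝ → ℝ) → ℕ → ℝ → ℝ)
    (hΦ0 : ∀ u t, Φ u 0 t = 1)
    (hΦ : ∀ u : ℝ → ℝ, ContinuousOn u (Set.Icc 0 T) →
      ∀ j, 1 ≤ j → j ≤ n → ∀ t ∈ Set.Icc (0:ℝ) T,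
      Φ u j t
        = (∑ k ∈ Finset.Icc 1 j,
            (-1 : ℝ) ^ (k + 1) * Φ u (j - k) t
              * (u t ^ k / (Nat.factorial k : ℝ))
              * ∏ l ∈ Finset.Icc 1 k, f (j + 1 - l) t)
        + ∑ k ∈ Finset.Icc 1 j,
            (-1 : ℝ) ^ k *
              ∫ s in (0:ℝ)..t,
                Φ u (j - k) s * (u s ^ k / (Nat.factorial k : ℝ)) * fd j k s)
    (N : (ℝ → ℝ) → ℝ)
    (hN : ∀ g : ℝ → ℝ, N g = ⨆ t : Set.Icc (0:ℝ) T, |g t|)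
    (w₁ w₂ : ℝ → ℝ)
    (hw₁ : ContinuousOn w₁ (Set.Icc 0 T)) (hw₂ : ContinuousOn w₂ (Set.Icc 0 T)) :
    N (fun t => Φ w₁ n t - Φ w₂ n t)
      ≤ ∑ k ∈ Finset.Icc 1 n,
          (N (Φ w₁ (n - k)) * N (fun t => w₁ t ^ k - w₂ t ^ k)
              / (Nat.factorial k : ℝ)
            + N (fun t => Φ w₁ (n - k) t - Φ w₂ (n - k) t) * N w₂ ^ k
              / (Nat.factorial k : ℝ))
          * (N (fun t => ∏ l ∈ Finset.Icc 1 k, f (n + 1 - l) t)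
              + T * N (fd n k)) := by
  have hTle : (0:ℝ) ≤ T := hT.le
  have h0 : (0:ℝ) ∈ Set.Icc (0:ℝ) T := ⟨le_refl 0, hTle⟩
  haveI : Nonempty (Set.Icc (0:ℝ) T) := ⟨⟨0, h0⟩⟩
  -- every continuous function is dominated by its sup norm on [0,T]
  have hNge : ∀ g : ℝ → ℝ, ContinuousOn g (Set.Icc 0 T) →
      ∀ t ∈ Set.Icc (0:ℝ) T, |g t| ≤ N g := by
    intro g hg t ht
    rw [hN]
    have hbdd := (isCompact_Icc.image_of_continuousOn hg.abs).bddAbove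
    rw [Set.image_eq_range] at hbdd
    exact le_ciSup hbdd ⟨t, ht⟩
  have hNnn : ∀ g : ℝ → ℝ, 0 ≤ N g := by
    intro g; rw [hN]; exact Real.iSup_nonneg fun t => abs_nonneg _
  -- the products are C¹ on [0,T]
  have hPcd : ∀ j k, 1 ≤ k → k ≤ j → j ≤ n →
      ContDiffOn ℝ 1 (fun t => ∏ l ∈ Finset.Icc 1 k, f (j + 1 - l) t) (Set.Icc 0 T) := by
    intro j k hk hkj hjn
    apply contDiffOn_prod
    intro l hl
    simp only [Finset.mem_Icc] at hl
    exact hf (j + 1 - l) (by omega) (by omega)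
  have hud : UniqueDiffOn ℝ (Set.Icc (0:ℝ) T) := uniqueDiffOn_Icc hT
  -- the derivatives fd are continuous on [0,T]
  have hfdcont : ∀ j k, 1 ≤ k → k ≤ j → j ≤ n →
      ContinuousOn (fd j k) (Set.Icc 0 T) := by
    intro j k hk hkj hjn
    have hcd := (hPcd j k hk hkj hjn).continuousOn_derivWithin hud le_rfl
    apply hcd.congr
    intro t ht
    exact ((hfd j k hk hkj hjn t ht).derivWithin (hud t ht)).symm
  -- Φ u j is continuous on [0,T] for continuous u (strong induction on j)
  have hΦcont : ∀ u : ℝ → ℝ, ContinuousOn u (Set.Icc 0 T) →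
      ∀ j, j ≤ n → ContinuousOn (Φ u j) (Set.Icc 0 T) := by
    intro u hu j
    induction j using Nat.strong_induction_on with
    | _ j ih =>
      intro hjn
      rcases Nat.eq_zero_or_pos j with h0j | h1j
      · subst h0j
        exact continuousOn_const.congr (fun t _ => hΦ0 u t)
      · apply ContinuousOn.congr _ (fun t ht => hΦ u hu j h1j hjn t ht)
        apply ContinuousOn.add
        · apply continuousOn_finset_sum
          intro k hk
          simp only [Finset.mem_Icc] at hk
          exact ((continuousOn_const.mul (ih (j - k) (by omega) (by omega))).mul
            ((hu.pow k).div_const _)).mul (hPcd j k hk.1 hk.2 hjn).continuousOn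
        · apply continuousOn_finset_sum
          intro k hk
          simp only [Finset.mem_Icc] at hk
          apply ContinuousOn.mul continuousOn_const
          have hint : ContinuousOn
              (fun s => Φ u (j - k) s * (u s ^ k / (Nat.factorial k : ℝ)) * fd j k s)
              (Set.Icc 0 T) :=
            ((ih (j - k) (by omega) (by omega)).mul ((hu.pow k).div_const _)).mul
              (hfdcont j k hk.1 hk.2 hjn)
          have hI : IntegrableOn
              (fun s => Φ u (j - k) s * (u s ^ k / (Nat.factorial k : ℝ)) * fd j k s)
              (Set.uIcc 0 T) := by
            rw [Set.uIcc_of_le hTle]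
            exact hint.integrableOn_Icc
          have := intervalIntegral.continuousOn_primitive_interval hI
          rwa [Set.uIcc_of_le hTle] at this
  -- pointwise estimate
  have key : ∀ t ∈ Set.Icc (0:ℝ) T,
      |Φ w₁ n t - Φ w₂ n t|
        ≤ ∑ k ∈ Finset.Icc 1 n,
            (N (Φ w₁ (n - k)) * N (fun t => w₁ t ^ k - w₂ t ^ k)
                / (Nat.factorial k : ℝ)
              + N (fun t => Φ w₁ (n - k) t - Φ w₂ (n - k) t) * N w₂ ^ k
                / (Nat.factorial k : ℝ))
            * (N (fun t => ∏ l ∈ Finset.Icc 1 k, f (n + 1 - l) t)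
                + T * N (fd n k)) := by
    intro t ht
    rw [hΦ w₁ hw₁ n hn le_rfl t ht, hΦ w₂ hw₂ n hn le_rfl t ht]
    have habs : ∀ x₁ y₁ x₂ y₂ : ℝ, |(x₁ + y₁) - (x₂ + y₂)| ≤ |x₁ - x₂| + |y₁ - y₂| := by
      intro x₁ y₁ x₂ y₂
      rw [add_sub_add_comm]
      exact abs_add_le _ _
    refine le_trans (habs _ _ _ _) ?_
    rw [← Finset.sum_sub_distrib, ← Finset.sum_sub_distrib]
    refine le_trans (add_le_add (Finset.abs_sum_le_sum_abs _ _)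
      (Finset.abs_sum_le_sum_abs _ _)) ?_
    rw [← Finset.sum_add_distrib]
    refine Finset.sum_le_sum ?_
    intro k hk
    simp only [Finset.mem_Icc] at hk
    obtain ⟨hk1, hkn⟩ := hk
    have hnk : n - k ≤ n := Nat.sub_le n k
    have hΦ₁c := hΦcont w₁ hw₁ (n - k) hnk
    have hΦ₂c := hΦcont w₂ hw₂ (n - k) hnk
    set a := N (Φ w₁ (n - k)) with ha
    set b := N (fun t => w₁ t ^ k - w₂ t ^ k) with hb
    set c := N (fun t => Φ w₁ (n - k) t - Φ w₂ (n - k) t) with hc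
    set d := N w₂ with hd
    have hDa : ∀ s ∈ Set.Icc (0:ℝ) T,
        |Φ w₁ (n - k) s * w₁ s ^ k - Φ w₂ (n - k) s * w₂ s ^ k|
          ≤ a * b + c * d ^ k := by
      intro s hs
      have hrw : Φ w₁ (n - k) s * w₁ s ^ k - Φ w₂ (n - k) s * w₂ s ^ k
          = Φ w₁ (n - k) s * (w₁ s ^ k - w₂ s ^ k)
            + (Φ w₁ (n - k) s - Φ w₂ (n - k) s) * w₂ s ^ k := by ring
      rw [hrw]
      refine le_trans (abs_add_le _ _) ?_
      rw [abs_mul, abs_mul, abs_pow]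
      gcongr <;> first
        | exact hNnn _
        | exact abs_nonneg _
        | exact hNge _ hΦ₁c s hs
        | exact hNge _ ((hw₁.pow k).sub (hw₂.pow k)) s hs
        | exact hNge _ (hΦ₁c.sub hΦ₂c) s hs
        | exact hNge _ hw₂ s hs
    have hfac : (0:ℝ) < (Nat.factorial k : ℝ) := by positivity
    have habd : 0 ≤ a * b + c * d ^ k := by
      have h1 := hNnn (Φ w₁ (n - k))
      have h2 := hNnn (fun t => w₁ t ^ k - w₂ t ^ k)
      have h3 := hNnn (fun t => Φ w₁ (n - k) t - Φ w₂ (n - k) t)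
      have h4 := hNnn w₂
      rw [← ha] at h1; rw [← hb] at h2; rw [← hc] at h3; rw [← hd] at h4
      positivity
    -- bound for the pointwise term
    have hbound1 :
        |((-1 : ℝ) ^ (k + 1) * Φ w₁ (n - k) t
            * (w₁ t ^ k / (Nat.factorial k : ℝ))
            * ∏ l ∈ Finset.Icc 1 k, f (n + 1 - l) t)
          - (-1 : ℝ) ^ (k + 1) * Φ w₂ (n - k) t
            * (w₂ t ^ k / (Nat.factorial k : ℝ))
            * ∏ l ∈ Finset.Icc 1 k, f (n + 1 - l) t|
        ≤ (a * b + c * d ^ k) / (Nat.factorial k : ℝ)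
            * N (fun t => ∏ l ∈ Finset.Icc 1 k, f (n + 1 - l) t) := by
      have e1 : ((-1 : ℝ) ^ (k + 1) * Φ w₁ (n - k) t
            * (w₁ t ^ k / (Nat.factorial k : ℝ))
            * ∏ l ∈ Finset.Icc 1 k, f (n + 1 - l) t)
          - (-1 : ℝ) ^ (k + 1) * Φ w₂ (n - k) t
            * (w₂ t ^ k / (Nat.factorial k : ℝ))
            * ∏ l ∈ Finset.Icc 1 k, f (n + 1 - l) t
        = (-1 : ℝ) ^ (k + 1) *
            (((Φ w₁ (n - k) t * w₁ t ^ k - Φ w₂ (n - k) t * w₂ t ^ k)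
                / (Nat.factorial k : ℝ))
              * ∏ l ∈ Finset.Icc 1 k, f (n + 1 - l) t) := by ring
      rw [e1, abs_mul, abs_pow, abs_neg, abs_one, one_pow, one_mul, abs_mul, abs_div,
        abs_of_pos hfac]
      gcongr <;> first
        | exact habd
        | exact hDa t ht
        | exact hNge _ (hPcd n k hk1 hkn le_rfl).continuousOn t ht
    -- bound for the integral term
    have hbound2 :
        |((-1 : ℝ) ^ k *
              ∫ s in (0:ℝ)..t,
                Φ w₁ (n - k) s * (w₁ s ^ k / (Nat.factorial k : ℝ)) * fd n k s)
          - (-1 : ℝ) ^ k *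
              ∫ s in (0:ℝ)..t,
                Φ w₂ (n - k) s * (w₂ s ^ k / (Nat.factorial k : ℝ)) * fd n k s|
        ≤ (a * b + c * d ^ k) / (Nat.factorial k : ℝ) * (T * N (fd n k)) := by
      have hsub : Set.uIcc (0:ℝ) t ⊆ Set.Icc 0 T := by
        rw [Set.uIcc_of_le ht.1]
        exact Set.Icc_subset_Icc le_rfl ht.2
      have hI₁ : IntervalIntegrable
          (fun s => Φ w₁ (n - k) s * (w₁ s ^ k / (Nat.factorial k : ℝ)) * fd n k s)
          volume 0 t :=
        (((hΦ₁c.mul ((hw₁.pow k).div_const _)).mul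
          (hfdcont n k hk1 hkn le_rfl)).mono hsub).intervalIntegrable
      have hI₂ : IntervalIntegrable
          (fun s => Φ w₂ (n - k) s * (w₂ s ^ k / (Nat.factorial k : ℝ)) * fd n k s)
          volume 0 t :=
        (((hΦ₂c.mul ((hw₂.pow k).div_const _)).mul
          (hfdcont n k hk1 hkn le_rfl)).mono hsub).intervalIntegrable
      have e2 : ((-1 : ℝ) ^ k *
              ∫ s in (0:ℝ)..t,
                Φ w₁ (n - k) s * (w₁ s ^ k / (Nat.factorial k : ℝ)) * fd n k s)
          - (-1 : ℝ) ^ k *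
              ∫ s in (0:ℝ)..t,
                Φ w₂ (n - k) s * (w₂ s ^ k / (Nat.factorial k : ℝ)) * fd n k s
        = (-1 : ℝ) ^ k *
            ∫ s in (0:ℝ)..t,
              (Φ w₁ (n - k) s * (w₁ s ^ k / (Nat.factorial k : ℝ)) * fd n k s
                - Φ w₂ (n - k) s * (w₂ s ^ k / (Nat.factorial k : ℝ)) * fd n k s) := by
        rw [intervalIntegral.integral_sub hI₁ hI₂, mul_sub]
      rw [e2, abs_mul, abs_pow, abs_neg, abs_one, one_pow, one_mul]
      have hC : ∀ s ∈ Set.uIoc (0:ℝ) t,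
          ‖Φ w₁ (n - k) s * (w₁ s ^ k / (Nat.factorial k : ℝ)) * fd n k s
            - Φ w₂ (n - k) s * (w₂ s ^ k / (Nat.factorial k : ℝ)) * fd n k s‖
          ≤ (a * b + c * d ^ k) / (Nat.factorial k : ℝ) * N (fd n k) := by
        intro s hs
        have hsI : s ∈ Set.Icc (0:ℝ) T := by
          rw [Set.uIoc_of_le ht.1] at hs
          exact ⟨hs.1.le, hs.2.trans ht.2⟩
        have e3 : Φ w₁ (n - k) s * (w₁ s ^ k / (Nat.factorial k : ℝ)) * fd n k s
            - Φ w₂ (n - k) s * (w₂ s ^ k / (Nat.factorial k : ℝ)) * fd n k s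
          = ((Φ w₁ (n - k) s * w₁ s ^ k - Φ w₂ (n - k) s * w₂ s ^ k)
              / (Nat.factorial k : ℝ)) * fd n k s := by ring
        rw [Real.norm_eq_abs, e3, abs_mul, abs_div, abs_of_pos hfac]
        gcongr <;> first
          | exact habd
          | exact hDa s hsI
          | exact hNge _ (hfdcont n k hk1 hkn le_rfl) s hsI
      have := intervalIntegral.norm_integral_le_of_norm_le_const hC
      rw [Real.norm_eq_abs] at this
      refine le_trans this ?_
      rw [sub_zero, abs_of_nonneg ht.1]
      have hq : 0 ≤ (a * b + c * d ^ k) / (Nat.factorial k : ℝ) * N (fd n k) :=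
        mul_nonneg (div_nonneg habd hfac.le) (hNnn _)
      calc (a * b + c * d ^ k) / (Nat.factorial k : ℝ) * N (fd n k) * t
          ≤ (a * b + c * d ^ k) / (Nat.factorial k : ℝ) * N (fd n k) * T := by
            exact mul_le_mul_of_nonneg_left ht.2 hq
        _ = (a * b + c * d ^ k) / (Nat.factorial k : ℝ) * (T * N (fd n k)) := by ring
    refine le_trans (add_le_add hbound1 hbound2) ?_
    have : (a * b / (Nat.factorial k : ℝ) + c * d ^ k / (Nat.factorial k : ℝ))
        = (a * b + c * d ^ k) / (Nat.factorial k : ℝ) := by ring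
    rw [this, ← mul_add]
  -- conclude by taking the sup
  rw [hN]
  exact ciSup_le fun t => key t t.2
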